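/- arXiv:2404.17746 — 2 statements merged into one kernel-verified Lean document; each statement's English description precedes it below -/
import Mathlib

section
/- Fix d ≥ 1, σ > 0, γ > 0 and a unit vector u ∈ ℝ^d. Then the multidimensional Rashomon ratio along the ray μ = s·u tends to one as the distance between the means grows: lim_{s→∞} R(s·u) = 1, where R(μ) is the normalized uniform surface measure of {(p, t) ∈ S^d : p ≠ 0, E_{μ,σ}(p, t) ≤ γ}. -/
open Classical MeasureTheory ProbabilityTheory

/-- `Φ`, the standard Gaussian cumulative distribution function. -/
noncomputable def Phi (x : ℝ) : ℝ := ((gaussianReal 0 1) (Set.Iic x)).toReal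

/-- Euclidean dot product on `ℝ^d`. -/
noncomputable def dotp {d : ℕ} (a b : Fin d → ℝ) : ℝ := ∑ i, a i * b i

/-- Euclidean norm of a vector in `ℝ^d`. -/
noncomputable def eucNorm {d : ℕ} (x : Fin d → ℝ) : ℝ := Real.sqrt (∑ i, (x i) ^ 2)

/-- `E_{μ,σ}(p, t)`: reducible error of the affine classifier with parameters `(p, t)` for
the antipodal equal-prior mixture of `N_d(−μ, σ²I)` and `N_d(μ, σ²I)`. -/
noncomputable def redErrMD (d : ℕ) (μ : Fin d → ℝ) (σ : ℝ) (p : Fin d → ℝ) (t : ℝ) : ℝ :=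
  Phi (eucNorm μ / σ) - (1 / 2) * Phi ((|dotp p μ| - t) / (σ * eucNorm p))
    - (1 / 2) * Phi ((t + |dotp p μ|) / (σ * eucNorm p))

/-- The (non-normalized) uniform surface measure on the unit sphere
`S^d ⊂ ℝ^{d+1}`. -/
noncomputable def sphereMeasure (d : ℕ) :
    Measure (Metric.sphere (0 : EuclideanSpace ℝ (Fin (d + 1))) 1) :=
  (volume : Measure (EuclideanSpace ℝ (Fin (d + 1)))).toSphere

/-- First `d` coordinates `p` of a point of `ℝ^{d+1}`. -/
noncomputable def pPart (d : ℕ) (x : EuclideanSpace ℝ (Fin (d + 1))) : Fin d → ℝ :=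
  fun i => x i.castSucc

/-- Last coordinate `t` of a point of `ℝ^{d+1}`. -/
noncomputable def tPart (d : ℕ) (x : EuclideanSpace ℝ (Fin (d + 1))) : ℝ :=
  x (Fin.last d)

/-- The multidimensional Rashomon ratio `R(μ)`: the normalized uniform surface measure of
`{(p, t) ∈ S^d : p ≠ 0, E_{μ,σ}(p, t) ≤ γ}`. -/
noncomputable def rashRatioMD (d : ℕ) (σ γ : ℝ) (μ : Fin d → ℝ) : ℝ :=
  (sphereMeasure d {x | pPart d x.val ≠ 0 ∧
      redErrMD d μ σ (pPart d x.val) (tPart d x.val) ≤ γ}).toReal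
    / (sphereMeasure d Set.univ).toReal

/-! ### Auxiliary lemmas -/

open Filter Set Pointwise

lemma Phi_monotone : Monotone Phi := fun a b hab =>
  ENNReal.toReal_mono (measure_ne_top _ _) (measure_mono (Set.Iic_subset_Iic.mpr hab))

lemma Phi_measurable : Measurable Phi := Phi_monotone.measurable

lemma Phi_tendsto_one : Tendsto Phi atTop (nhds 1) := by
  have h := tendsto_measure_Iic_atTop (gaussianReal 0 1)
  rw [measure_univ] at h
  have h2 := (ENNReal.tendsto_toReal (by simp : (1 : ENNReal) ≠ ⊤)).comp h
  rw [ENNReal.toReal_one] at h2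
  exact h2

lemma eucNorm_pos_of_ne {d : ℕ} {p : Fin d → ℝ} {i : Fin d} (hi : p i ≠ 0) :
    0 < eucNorm p := by
  unfold eucNorm
  refine Real.sqrt_pos.mpr (Finset.sum_pos' (fun j _ => sq_nonneg _)
    ⟨i, Finset.mem_univ i, by positivity⟩)

lemma exists_ne_of_dotp_ne {d : ℕ} {p u : Fin d → ℝ} (h : dotp p u ≠ 0) :
    ∃ i, p i ≠ 0 := by
  by_contra hc
  push_neg at hc
  exact h (by simp [dotp, hc])

/-- The reducible error along the ray tends to `0` for fixed `(p, t)` with `p·u ≠ 0`. -/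
lemma redErr_tendsto_zero {d : ℕ} {σ : ℝ} (hσ : 0 < σ) {u : Fin d → ℝ}
    (hu : eucNorm u = 1) (p : Fin d → ℝ) (t : ℝ) (hpu : dotp p u ≠ 0) :
    Tendsto (fun s : ℝ => redErrMD d (s • u) σ p t) atTop (nhds 0) := by
  obtain ⟨i, hi⟩ := exists_ne_of_dotp_ne hpu
  have hep : 0 < eucNorm p := eucNorm_pos_of_ne hi
  have hsum : ∑ j, u j ^ 2 = 1 := by
    have hnn : (0:ℝ) ≤ ∑ j, u j ^ 2 := Finset.sum_nonneg fun j _ => sq_nonneg _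
    have := Real.sq_sqrt hnn
    rw [show Real.sqrt (∑ j, u j ^ 2) = 1 from hu] at this
    simpa using this.symm
  have hnorm : ∀ s : ℝ, eucNorm (s • u) = |s| := by
    intro s
    unfold eucNorm
    have : ∑ j, ((s • u) j) ^ 2 = s ^ 2 * ∑ j, u j ^ 2 := by
      rw [Finset.mul_sum]
      exact Finset.sum_congr rfl fun j _ => by simp [mul_pow]
    rw [this, hsum, mul_one, Real.sqrt_sq_eq_abs]
  have hdot : ∀ s : ℝ, dotp p (s • u) = s * dotp p u := by
    intro s
    unfold dotp
    rw [Finset.mul_sum]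
    exact Finset.sum_congr rfl fun j _ => by simp; ring
  have ha : 0 < |dotp p u| := abs_pos.mpr hpu
  have hc : 0 < σ * eucNorm p := mul_pos hσ hep
  have habs : Tendsto (fun s : ℝ => |s|) atTop atTop := tendsto_abs_atTop_atTop
  have h1 : Tendsto (fun s : ℝ => eucNorm (s • u) / σ) atTop atTop := by
    simp only [hnorm]; exact habs.atTop_div_const hσ
  have h2 : Tendsto (fun s : ℝ => (|dotp p (s • u)| - t) / (σ * eucNorm p)) atTop atTop := by
    simp only [hdot, abs_mul]
    refine Tendsto.atTop_div_const hc ?_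
    simp only [sub_eq_add_neg]
    exact tendsto_atTop_add_const_right _ _ (habs.atTop_mul_const ha)
  have h3 : Tendsto (fun s : ℝ => (t + |dotp p (s • u)|) / (σ * eucNorm p)) atTop atTop := by
    simp only [hdot, abs_mul]
    exact Tendsto.atTop_div_const hc
      (tendsto_atTop_add_const_left _ _ (habs.atTop_mul_const ha))
  have := ((Phi_tendsto_one.comp h1).sub
      ((Phi_tendsto_one.comp h2).const_mul (1/2 : ℝ))).sub
      ((Phi_tendsto_one.comp h3).const_mul (1/2 : ℝ))
  simp only [Function.comp] at this
  have heq : (1 : ℝ) - (1/2) * 1 - (1/2) * 1 = 0 := by norm_num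
  rw [heq] at this
  exact this

/-- The linear functional `x ↦ ∑ i, x i.castSucc * u i` on `ℝ^{d+1}`. -/
noncomputable def phiLin (d : ℕ) (u : Fin d → ℝ) : EuclideanSpace ℝ (Fin (d+1)) →ₗ[ℝ] ℝ where
  toFun x := ∑ i, x i.castSucc * u i
  map_add' x y := by simp [add_mul, Finset.sum_add_distrib]
  map_smul' c x := by simp [Finset.mul_sum, mul_assoc]

lemma sphereMeasure_ne_top (d : ℕ) : sphereMeasure d Set.univ ≠ ⊤ := by
  unfold sphereMeasure
  exact measure_ne_top _ _

lemma sphereMeasure_univ_ne_zero (d : ℕ) : sphereMeasure d Set.univ ≠ 0 := by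
  unfold sphereMeasure
  rw [Measure.toSphere_apply_univ]
  refine mul_ne_zero ?_ (Metric.measure_ball_pos _ _ one_pos).ne'
  simp [Module.finrank_pos.ne']

/-- Measurability of coordinates on the sphere. -/
lemma coord_measurable (d : ℕ) (j : Fin (d+1)) :
    Measurable (fun x : Metric.sphere (0 : EuclideanSpace ℝ (Fin (d + 1))) 1 =>
      (x : EuclideanSpace ℝ (Fin (d+1))) j) :=
  (measurable_pi_apply j).comp ((WithLp.measurable_ofLp _ _).comp measurable_subtype_coe)

/-- The set where `p·u = 0` is null on the sphere. -/
lemma sphereMeasure_dotp_zero (d : ℕ) {u : Fin d → ℝ} (hu : u ≠ 0) :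
    sphereMeasure d {x | dotp (pPart d x.val) u = 0} = 0 := by
  have hset : {x : Metric.sphere (0 : EuclideanSpace ℝ (Fin (d + 1))) 1 |
      dotp (pPart d x.val) u = 0}
      = (fun x : Metric.sphere (0 : EuclideanSpace ℝ (Fin (d + 1))) 1 =>
          phiLin d u x.val) ⁻¹' {0} := by
    ext x
    simp [phiLin, dotp, pPart]
  have hφcont : Continuous (phiLin d u) := (phiLin d u).continuous_of_finiteDimensional
  have hmeas : MeasurableSet {x : Metric.sphere (0 : EuclideanSpace ℝ (Fin (d + 1))) 1 |
      dotp (pPart d x.val) u = 0} := by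
    rw [hset]
    exact ((hφcont.measurable).comp measurable_subtype_coe) (measurableSet_singleton 0)
  unfold sphereMeasure
  rw [Measure.toSphere_apply' _ hmeas]
  have hker : volume ((LinearMap.ker (phiLin d u) : Submodule ℝ
      (EuclideanSpace ℝ (Fin (d+1)))) : Set (EuclideanSpace ℝ (Fin (d+1)))) = 0 := by
    refine Measure.addHaar_submodule _ _ ?_
    intro htop
    obtain ⟨i₀, hi₀⟩ : ∃ i, u i ≠ 0 := by
      by_contra hc; push_neg at hc; exact hu (funext hc)
    have hmem : (EuclideanSpace.single i₀.castSucc (1:ℝ)) ∈ LinearMap.ker (phiLin d u) := by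
      rw [htop]; trivial
    have : phiLin d u (EuclideanSpace.single i₀.castSucc (1:ℝ)) = u i₀ := by
      simp [phiLin, EuclideanSpace.single_apply, Fin.castSucc_inj]
    rw [LinearMap.mem_ker, this] at hmem
    exact hi₀ hmem
  refine mul_eq_zero_of_right _ (measure_mono_null ?_ hker)
  rintro z ⟨r, hr, y, ⟨x, hx, rfl⟩, rfl⟩
  have hx0 : phiLin d u (x : EuclideanSpace ℝ (Fin (d+1))) = 0 := by
    have := hx
    rw [hset] at this
    simpa using this
  simp only [SetLike.mem_coe, LinearMap.mem_ker, LinearMap.map_smul, smul_eq_mul, hx0, mul_zero]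

/-- Measurability of the Rashomon set on the sphere. -/
lemma rashSet_measurable (d : ℕ) (σ γ : ℝ) (μ : Fin d → ℝ) :
    MeasurableSet {x : Metric.sphere (0 : EuclideanSpace ℝ (Fin (d + 1))) 1 |
      pPart d x.val ≠ 0 ∧ redErrMD d μ σ (pPart d x.val) (tPart d x.val) ≤ γ} := by
  have hp : Measurable (fun x : Metric.sphere (0 : EuclideanSpace ℝ (Fin (d + 1))) 1 =>
      pPart d x.val) :=
    measurable_pi_lambda _ fun i => coord_measurable d i.castSucc
  have h1 : MeasurableSet {x : Metric.sphere (0 : EuclideanSpace ℝ (Fin (d + 1))) 1 |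
      pPart d x.val ≠ 0} := (hp (measurableSet_singleton 0)).compl
  have hdot : Measurable (fun x : Metric.sphere (0 : EuclideanSpace ℝ (Fin (d + 1))) 1 =>
      dotp (pPart d x.val) μ) := by
    unfold dotp pPart
    exact Finset.measurable_sum _ fun i _ => (coord_measurable d i.castSucc).mul measurable_const
  have hnrm : Measurable (fun x : Metric.sphere (0 : EuclideanSpace ℝ (Fin (d + 1))) 1 =>
      eucNorm (pPart d x.val)) := by
    unfold eucNorm pPart
    exact Real.continuous_sqrt.measurable.comp
      (Finset.measurable_sum _ fun i _ => (coord_measurable d i.castSucc).pow measurable_const)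
  have ht : Measurable (fun x : Metric.sphere (0 : EuclideanSpace ℝ (Fin (d + 1))) 1 =>
      tPart d x.val) := coord_measurable d (Fin.last d)
  have hF : Measurable (fun x : Metric.sphere (0 : EuclideanSpace ℝ (Fin (d + 1))) 1 =>
      redErrMD d μ σ (pPart d x.val) (tPart d x.val)) := by
    unfold redErrMD
    refine Measurable.sub (Measurable.sub measurable_const ?_) ?_
    · exact (Phi_measurable.comp ((hdot.abs.sub ht).div
        (measurable_const.mul hnrm))).const_mul _
    · exact (Phi_measurable.comp ((ht.add hdot.abs).div
        (measurable_const.mul hnrm))).const_mul _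
  exact h1.inter (measurableSet_le hF measurable_const)

/-- Along a ray `μ = s·u` with `u` a unit vector, the multidimensional
Rashomon ratio tends to one as the distance between the class means grows:
`lim_{s→∞} R(s·u) = 1`. -/
theorem rashRatioMD_tendsto_one
    (d : ℕ) (hd : 1 ≤ d) (σ γ : ℝ) (hσ : 0 < σ) (hγ : 0 < γ)
    (u : Fin d → ℝ) (hu : eucNorm u = 1) :
    Filter.Tendsto (fun s : ℝ => rashRatioMD d σ γ (s • u)) Filter.atTop (nhds 1) := by
  haveI : IsFiniteMeasure (sphereMeasure d) := by
    unfold sphereMeasure; infer_instance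
  set A : ℝ → Set (Metric.sphere (0 : EuclideanSpace ℝ (Fin (d + 1))) 1) :=
    fun s => {x | pPart d x.val ≠ 0 ∧
      redErrMD d (s • u) σ (pPart d x.val) (tPart d x.val) ≤ γ} with hA
  have hu0 : u ≠ 0 := by
    intro h
    rw [h] at hu
    simp [eucNorm] at hu
  have hnull : sphereMeasure d {x | dotp (pPart d x.val) u = 0} = 0 :=
    sphereMeasure_dotp_zero d hu0
  have hae : ∀ᵐ x ∂(sphereMeasure d), dotp (pPart d x.val) u ≠ 0 := by
    rw [ae_iff]
    simpa using hnull
  have key : Tendsto (fun s => sphereMeasure d (A s)) atTop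
      (nhds (sphereMeasure d Set.univ)) := by
    refine tendsto_measure_of_ae_tendsto_indicator_of_isFiniteMeasure atTop
      MeasurableSet.univ (fun s => rashSet_measurable d σ γ (s • u)) ?_
    filter_upwards [hae] with x hx
    have hp0 : pPart d x.val ≠ 0 := by
      intro h
      exact hx (by simp [dotp, h])
    have hconv := redErr_tendsto_zero hσ hu (pPart d x.val) (tPart d x.val) hx
    filter_upwards [hconv.eventually_lt_const hγ] with s hs
    simp only [Set.mem_univ, iff_true, hA, Set.mem_setOf_eq]
    exact ⟨hp0, hs.le⟩
  have hT : sphereMeasure d Set.univ ≠ ⊤ := sphereMeasure_ne_top d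
  have h2 : Tendsto (fun s => (sphereMeasure d (A s)).toReal) atTop
      (nhds (sphereMeasure d Set.univ).toReal) :=
    (ENNReal.tendsto_toReal hT).comp key
  have h3 := h2.div_const (sphereMeasure d Set.univ).toReal
  rw [div_self (ENNReal.toReal_ne_zero.mpr ⟨sphereMeasure_univ_ne_zero d, hT⟩)] at h3
  exact h3
end

section
/- For every d ≥ 1, μ ∈ ℝ^d \ {0}, σ > 0 and γ > 0, the multidimensional Rashomon ratio is strictly positive: R(μ) > 0. In particular, E_{μ,σ}(p, t) is continuous in (p, t) on {p ≠ 0} and E_{μ,σ}(μ, 0) = Φ(‖μ‖/σ) − (1/2)Φ(‖μ‖/σ) − (1/2)Φ(‖μ‖/σ) = 0, so the sublevel set {(p,t) ∈ S^d : E_{μ,σ}(p,t) ≤ γ} contains a relatively open neighborhood of the point (μ/‖μ‖, 0) ∈ S^d of positive surface measure. -/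
open Classical MeasureTheory ProbabilityTheory

section Aux

open Metric Set Pointwise

lemma Phi_eq_integral (x : ℝ) :
    Phi x = ∫ t in Set.Iic x, gaussianPDFReal 0 1 t := by
  unfold Phi
  rw [gaussianReal_apply_eq_integral 0 one_ne_zero,
    ENNReal.toReal_ofReal (integral_nonneg fun t => gaussianPDFReal_nonneg 0 1 t)]

lemma Phi_continuous : Continuous Phi := by
  have hint : Integrable (gaussianPDFReal 0 1) := integrable_gaussianPDFReal 0 1
  have h : ∀ x, Phi x = Phi 0 + ∫ t in (0:ℝ)..x, gaussianPDFReal 0 1 t := by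
    intro x
    have h2 := intervalIntegral.integral_Iic_sub_Iic (hint.integrableOn (s := Set.Iic 0))
      (hint.integrableOn (s := Set.Iic x))
    rw [Phi_eq_integral, Phi_eq_integral]
    linarith
  rw [show Phi = fun x => Phi 0 + ∫ t in (0:ℝ)..x, gaussianPDFReal 0 1 t from funext h]
  exact continuous_const.add (hint.continuous_primitive 0)

lemma eucNorm_pos {d : ℕ} {x : Fin d → ℝ} (hx : x ≠ 0) : 0 < eucNorm x := by
  obtain ⟨i, hi⟩ := Function.ne_iff.1 hx
  refine Real.sqrt_pos.2 (Finset.sum_pos' (fun j _ => sq_nonneg _)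
    ⟨i, Finset.mem_univ i, ?_⟩)
  exact pow_pos (abs_pos.2 hi) 2 |>.trans_eq (sq_abs _)

lemma sq_eucNorm {d : ℕ} (x : Fin d → ℝ) : eucNorm x ^ 2 = ∑ i, (x i) ^ 2 :=
  Real.sq_sqrt (Finset.sum_nonneg fun _ _ => sq_nonneg _)

lemma eucNorm_continuous {d : ℕ} : Continuous (eucNorm : (Fin d → ℝ) → ℝ) :=
  Real.continuous_sqrt.comp (continuous_finset_sum _ fun i _ => (continuous_apply i).pow 2)

lemma redErr_contOn (d : ℕ) (μ : Fin d → ℝ) (σ : ℝ) (hσ : 0 < σ) :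
    ContinuousOn (fun q : (Fin d → ℝ) × ℝ => redErrMD d μ σ q.1 q.2)
      {q : (Fin d → ℝ) × ℝ | q.1 ≠ 0} := by
  have hdot : Continuous fun q : (Fin d → ℝ) × ℝ => dotp q.1 μ := by
    unfold dotp
    exact continuous_finset_sum _ fun i _ =>
      ((continuous_apply i).comp continuous_fst).mul continuous_const
  have hden : ContinuousOn (fun q : (Fin d → ℝ) × ℝ => σ * eucNorm q.1)
      {q : (Fin d → ℝ) × ℝ | q.1 ≠ 0} :=
    (continuous_const.mul (eucNorm_continuous.comp continuous_fst)).continuousOn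
  have hdenne : ∀ q ∈ {q : (Fin d → ℝ) × ℝ | q.1 ≠ 0}, σ * eucNorm q.1 ≠ 0 :=
    fun q hq => (mul_pos hσ (eucNorm_pos hq)).ne'
  refine ContinuousOn.sub (ContinuousOn.sub continuousOn_const ?_) ?_
  · exact continuousOn_const.mul (Phi_continuous.comp_continuousOn
      (((hdot.abs.sub continuous_snd).continuousOn).div hden hdenne))
  · exact continuousOn_const.mul (Phi_continuous.comp_continuousOn
      (((continuous_snd.add hdot.abs).continuousOn).div hden hdenne))

lemma redErr_at_mu (d : ℕ) (μ : Fin d → ℝ) (hμ : μ ≠ 0) (σ : ℝ) (hσ : 0 < σ) :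
    redErrMD d μ σ μ 0
      = Phi (eucNorm μ / σ) - (1 / 2) * Phi (eucNorm μ / σ)
          - (1 / 2) * Phi (eucNorm μ / σ) := by
  have he : 0 < eucNorm μ := eucNorm_pos hμ
  have hdm : dotp μ μ = eucNorm μ ^ 2 := by
    rw [sq_eucNorm]; unfold dotp; exact Finset.sum_congr rfl fun i _ => (sq (μ i)).symm
  have habs : |dotp μ μ| = eucNorm μ ^ 2 := by rw [hdm, abs_of_nonneg (sq_nonneg _)]
  unfold redErrMD
  rw [habs]
  have h1 : (eucNorm μ ^ 2 - 0) / (σ * eucNorm μ) = eucNorm μ / σ := by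
    field_simp; ring
  have h2 : (0 + eucNorm μ ^ 2) / (σ * eucNorm μ) = eucNorm μ / σ := by
    field_simp; ring
  rw [h1, h2]

lemma toSphere_open_pos {n : ℕ} (hn : n ≠ 0)
    {U : Set (sphere (0 : EuclideanSpace ℝ (Fin n)) 1)}
    (hU : IsOpen U) (hne : U.Nonempty) :
    0 < (volume : Measure (EuclideanSpace ℝ (Fin n))).toSphere U := by
  set E := EuclideanSpace ℝ (Fin n)
  obtain ⟨W, hW, hUW⟩ := isOpen_induced_iff.1 hU
  set S : Set E := Subtype.val '' U with hS
  set T : Set E := {y : E | y ≠ 0 ∧ ‖y‖ < 1 ∧ (‖y‖⁻¹ • y) ∈ W} with hT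
  have hsub : ∀ x : sphere (0 : E) 1, x ∈ U → (x : E) ∈ W := by
    intro x hx; rw [← hUW] at hx; exact hx
  have heq : Ioo (0:ℝ) 1 • S = T := by
    ext y
    constructor
    · rintro ⟨r, hr, x, hx, rfl⟩
      obtain ⟨x', hx', rfl⟩ := hx
      have hnx : ‖(x' : E)‖ = 1 := mem_sphere_zero_iff_norm.1 x'.2
      have hr0 : (0:ℝ) < r := hr.1
      have hny : ‖r • (x' : E)‖ = r := by
        rw [norm_smul, hnx, mul_one, Real.norm_eq_abs, abs_of_pos hr0]
      refine ⟨?_, ?_, ?_⟩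
      · intro h
        rw [smul_eq_zero] at h
        rcases h with h | h
        · exact hr0.ne' h
        · rw [h, norm_zero] at hnx; norm_num at hnx
      · rw [hny]; exact hr.2
      · rw [hny, inv_smul_smul₀ hr0.ne']
        exact hsub _ hx'
    · rintro ⟨hy0, hy1, hyW⟩
      have hr0 : (0:ℝ) < ‖y‖ := norm_pos_iff.2 hy0
      have hmem : (‖y‖⁻¹ • y) ∈ sphere (0 : E) 1 := by
        rw [mem_sphere_zero_iff_norm, norm_smul, Real.norm_eq_abs,
          abs_of_pos (inv_pos.2 hr0), inv_mul_cancel₀ hr0.ne']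
      refine ⟨‖y‖, ⟨hr0, hy1⟩, ‖y‖⁻¹ • y, ⟨⟨_, hmem⟩, ?_, rfl⟩, smul_inv_smul₀ hr0.ne' y⟩
      rw [← hUW]; exact hyW
  have hTopen : IsOpen T := by
    have hg : ContinuousOn (fun y : E => ‖y‖⁻¹ • y) {y : E | y ≠ 0} := by
      refine ContinuousOn.smul (f := fun y : E => ‖y‖⁻¹) (g := fun y : E => y) ?_ continuousOn_id
      exact (continuous_norm.continuousOn).inv₀ fun y hy => norm_ne_zero_iff.2 hy
    have h1 : IsOpen ({y : E | y ≠ 0} ∩ (fun y : E => ‖y‖⁻¹ • y) ⁻¹' W) :=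
      hg.isOpen_inter_preimage isOpen_ne hW
    have h2 : IsOpen ((fun y : E => ‖y‖) ⁻¹' Iio 1) := isOpen_Iio.preimage continuous_norm
    have : T = ({y : E | y ≠ 0} ∩ (fun y : E => ‖y‖⁻¹ • y) ⁻¹' W) ∩
        ((fun y : E => ‖y‖) ⁻¹' Iio 1) := by
      ext y; simp only [hT, mem_setOf_eq, mem_inter_iff, mem_preimage, mem_Iio]; tauto
    rw [this]; exact h1.inter h2
  have hTne : T.Nonempty := by
    obtain ⟨x, hx⟩ := hne
    rw [← heq]
    exact ⟨(2⁻¹ : ℝ) • (x : E), Set.smul_mem_smul (by norm_num) ⟨x, hx, rfl⟩⟩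
  have hvol : 0 < volume T := hTopen.measure_pos volume hTne
  rw [Measure.toSphere_apply' _ hU.measurableSet, ← hS, heq]
  refine ENNReal.mul_pos ?_ hvol.ne'
  simp [finrank_euclideanSpace_fin, hn]

end Aux

/-- For `μ ≠ 0` the multidimensional Rashomon ratio is strictly positive.
In particular `E_{μ,σ}` is continuous in `(p, t)` on `{p ≠ 0}` and `E_{μ,σ}(μ, 0) = 0`, so
the sublevel set `{(p,t) ∈ S^d : E_{μ,σ}(p,t) ≤ γ}` contains a relatively open neighborhood
of the point `(μ/‖μ‖, 0) ∈ S^d` of positive surface measure. -/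
theorem rashRatioMD_pos
    (d : ℕ) (hd : 1 ≤ d) (μ : Fin d → ℝ) (hμ : μ ≠ 0)
    (σ : ℝ) (hσ : 0 < σ) (γ : ℝ) (hγ : 0 < γ) :
    ContinuousOn (fun q : (Fin d → ℝ) × ℝ => redErrMD d μ σ q.1 q.2)
        {q : (Fin d → ℝ) × ℝ | q.1 ≠ 0} ∧
    redErrMD d μ σ μ 0
      = Phi (eucNorm μ / σ) - (1 / 2) * Phi (eucNorm μ / σ)
          - (1 / 2) * Phi (eucNorm μ / σ) ∧
    redErrMD d μ σ μ 0 = 0 ∧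
    (∃ U : Set (Metric.sphere (0 : EuclideanSpace ℝ (Fin (d + 1))) 1),
      IsOpen U ∧
      ((Fin.snoc (fun i => μ i / eucNorm μ) 0 : Fin (d + 1) → ℝ)
        ∈ (fun x => (fun i => x.val i)) '' U) ∧
      (∀ x ∈ U, redErrMD d μ σ (pPart d x.val) (tPart d x.val) ≤ γ) ∧
      0 < sphereMeasure d U) ∧
    0 < rashRatioMD d σ γ μ := by
  have he : 0 < eucNorm μ := eucNorm_pos hμ
  -- the sphere point
  set s : Fin (d + 1) → ℝ := Fin.snoc (fun i => μ i / eucNorm μ) 0 with hs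
  have hx0mem : (WithLp.equiv 2 (Fin (d+1) → ℝ)).symm s
      ∈ Metric.sphere (0 : EuclideanSpace ℝ (Fin (d+1))) 1 := by
    rw [mem_sphere_zero_iff_norm, EuclideanSpace.norm_eq]
    have hsum : ∑ i : Fin (d+1),
        ‖(WithLp.equiv 2 (Fin (d+1) → ℝ)).symm s i‖ ^ 2 = 1 := by
      simp only [WithLp.equiv_symm_apply, PiLp.toLp_apply, Real.norm_eq_abs, sq_abs, hs]
      rw [Fin.sum_univ_castSucc]
      simp only [Fin.snoc_castSucc, Fin.snoc_last]
      have h3 : ∑ i : Fin d, (μ i / eucNorm μ) ^ 2 = (∑ i, (μ i)^2) / (eucNorm μ)^2 := by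
        rw [Finset.sum_div]; exact Finset.sum_congr rfl fun i _ => (div_pow _ _ _)
      rw [h3, ← sq_eucNorm, div_self (by positivity)]
      norm_num
    rw [hsum, Real.sqrt_one]
  set x₀ : Metric.sphere (0 : EuclideanSpace ℝ (Fin (d+1))) 1 :=
    ⟨(WithLp.equiv 2 (Fin (d+1) → ℝ)).symm s, hx0mem⟩ with hx0
  -- coordinates of the sphere point
  have hpPart : pPart d x₀.val = fun i => μ i / eucNorm μ := by
    funext i
    show ((WithLp.equiv 2 (Fin (d+1) → ℝ)).symm s) i.castSucc = μ i / eucNorm μ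
    simp [hs]
  have htPart : tPart d x₀.val = 0 := by
    show ((WithLp.equiv 2 (Fin (d+1) → ℝ)).symm s) (Fin.last d) = 0
    simp [hs]
  -- value of the error at the sphere point
  have hval : redErrMD d μ σ (fun i => μ i / eucNorm μ) 0 = 0 := by
    have hdot : dotp (fun i => μ i / eucNorm μ) μ = eucNorm μ := by
      unfold dotp
      have : ∑ i, (μ i / eucNorm μ) * μ i = (∑ i, (μ i)^2) / eucNorm μ := by
        rw [Finset.sum_div]
        exact Finset.sum_congr rfl fun i _ => by rw [sq]; ring
      rw [this, ← sq_eucNorm, sq, mul_div_assoc, div_self he.ne', mul_one]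
    have hnorm : eucNorm (fun i => μ i / eucNorm μ) = 1 := by
      have h3 : ∑ i : Fin d, (μ i / eucNorm μ) ^ 2 = (∑ i, (μ i)^2) / (eucNorm μ)^2 := by
        rw [Finset.sum_div]; exact Finset.sum_congr rfl fun i _ => (div_pow _ _ _)
      have hsq : eucNorm (fun i => μ i / eucNorm μ) ^ 2 = 1 := by
        rw [sq_eucNorm, h3, ← sq_eucNorm, div_self (by positivity)]
      have hnn : 0 ≤ eucNorm (fun i => μ i / eucNorm μ) := Real.sqrt_nonneg _
      nlinarith [hsq, hnn]
    unfold redErrMD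
    rw [hdot, hnorm, abs_of_pos he, mul_one, sub_zero, zero_add]
    ring
  -- continuity assertion
  have hcont := redErr_contOn d μ σ hσ
  refine ⟨hcont, redErr_at_mu d μ hμ σ hσ, by rw [redErr_at_mu d μ hμ σ hσ]; ring, ?_⟩
  -- build the open set U
  have hcoord : ∀ i : Fin (d+1),
      Continuous fun y : EuclideanSpace ℝ (Fin (d+1)) => y i :=
    fun i => (continuous_apply i).comp (PiLp.continuous_ofLp 2 fun _ : Fin (d+1) => ℝ)
  have hG : Continuous fun x : Metric.sphere (0 : EuclideanSpace ℝ (Fin (d+1))) 1 =>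
      ((pPart d x.val, tPart d x.val) : (Fin d → ℝ) × ℝ) := by
    refine Continuous.prodMk ?_ ?_
    · exact continuous_pi fun i : Fin d => (hcoord i.castSucc).comp continuous_subtype_val
    · exact (hcoord (Fin.last d)).comp continuous_subtype_val
  set V : Set (Metric.sphere (0 : EuclideanSpace ℝ (Fin (d+1))) 1) :=
    {x | pPart d x.val ≠ 0} with hV
  have hVopen : IsOpen V := by
    have : V = (fun x : Metric.sphere (0 : EuclideanSpace ℝ (Fin (d+1))) 1 =>
        pPart d x.val) ⁻¹' {p | p ≠ 0} := rfl
    rw [this]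
    exact isOpen_ne.preimage (continuous_pi fun i : Fin d =>
      (hcoord i.castSucc).comp continuous_subtype_val)
  have hF : ContinuousOn (fun x : Metric.sphere (0 : EuclideanSpace ℝ (Fin (d+1))) 1 =>
      redErrMD d μ σ (pPart d x.val) (tPart d x.val)) V := by
    have : (fun x : Metric.sphere (0 : EuclideanSpace ℝ (Fin (d+1))) 1 =>
        redErrMD d μ σ (pPart d x.val) (tPart d x.val))
        = (fun q : (Fin d → ℝ) × ℝ => redErrMD d μ σ q.1 q.2) ∘
          (fun x => (pPart d x.val, tPart d x.val)) := rfl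
    rw [this]
    exact hcont.comp hG.continuousOn fun x hx => hx
  set U : Set (Metric.sphere (0 : EuclideanSpace ℝ (Fin (d+1))) 1) :=
    V ∩ (fun x => redErrMD d μ σ (pPart d x.val) (tPart d x.val)) ⁻¹' Set.Iio γ with hU
  have hUopen : IsOpen U := hF.isOpen_inter_preimage hVopen isOpen_Iio
  have hx0V : x₀ ∈ V := by
    rw [hV, Set.mem_setOf_eq, hpPart]
    intro h
    obtain ⟨i, hi⟩ := Function.ne_iff.1 hμ
    have := congrFun h i
    simp only [Pi.zero_apply] at this
    exact hi (by field_simp at this; simpa using this)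
  have hx0U : x₀ ∈ U := by
    refine ⟨hx0V, ?_⟩
    simp only [Set.mem_preimage, Set.mem_Iio, hpPart, htPart, hval]
    exact hγ
  have hUpos : 0 < sphereMeasure d U := by
    unfold sphereMeasure
    exact toSphere_open_pos (Nat.succ_ne_zero d) hUopen ⟨x₀, hx0U⟩
  have hUle : ∀ x ∈ U, redErrMD d μ σ (pPart d x.val) (tPart d x.val) ≤ γ :=
    fun x hx => le_of_lt hx.2
  refine ⟨⟨U, hUopen, ⟨x₀, hx0U, ?_⟩, hUle, hUpos⟩, ?_⟩
  · funext i; rfl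
  · -- positivity of the ratio
    haveI : IsFiniteMeasure (sphereMeasure d) := by unfold sphereMeasure; infer_instance
    have hnum : 0 < sphereMeasure d {x | pPart d x.val ≠ 0 ∧
        redErrMD d μ σ (pPart d x.val) (tPart d x.val) ≤ γ} := by
      refine hUpos.trans_le (measure_mono ?_)
      intro x hx
      exact ⟨hx.1, le_of_lt hx.2⟩
    have hden : 0 < sphereMeasure d Set.univ := by
      unfold sphereMeasure
      exact toSphere_open_pos (Nat.succ_ne_zero d) isOpen_univ ⟨x₀, Set.mem_univ _⟩
    unfold rashRatioMD
    refine div_pos (ENNReal.toReal_pos hnum.ne' (measure_ne_top _ _))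
      (ENNReal.toReal_pos hden.ne' (measure_ne_top _ _))
end
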